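/- For every integer d ≥ 1 and every integer N ≥ 1, there exists a recoloring algorithm A on the vertex set V = {1,…,N} such that for every update sequence G₀, G₁, …, G_m: (i) every coloring produced by A takes values in {1, …, 2·(d + 1)·C}, where C = max_{0 ≤ t ≤ m} χ(G_t); and (ii) at every single step t (1 ≤ t ≤ m), the number of recolorings performed is at most (d + 1)·⌈N^{1/d}⌉. In particular, there is an O(d)-competitive recoloring algorithm performing O(d·N^{1/d}) vertex recolorings per update in the worst case. -/

import Mathlib

/-- `H` is obtained from `G` by inserting or deleting exactly one edge. -/
def isStep {V : Type*} (G H : SimpleGraph V) : Prop :=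
  ∃ u v : V, u ≠ v ∧
    ((¬ G.Adj u v ∧ H = G ⊔ SimpleGraph.fromEdgeSet {s(u, v)}) ∨
     (G.Adj u v ∧ H = G \ SimpleGraph.fromEdgeSet {s(u, v)}))

/-- `f` is a proper (ℕ-valued) coloring of `G`. -/
def IsProperNat {V : Type*} (G : SimpleGraph V) (f : V → ℕ) : Prop :=
  ∀ ⦃u v⦄, G.Adj u v → f u ≠ f v

/-- Number of vertices on which the colorings `f` and `g` differ. -/
def recount {N : ℕ} (f g : Fin N → ℕ) : ℕ :=
  (Finset.univ.filter fun v => f v ≠ g v).card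

namespace BigBuckets

open Finset

attribute [local instance] Classical.propDecidable

/-! ### A canonical optimal coloring of a graph on `Fin N` -/

noncomputable def col {N : ℕ} (G : SimpleGraph (Fin N)) : Fin N → ℕ :=
  fun v => (G.colorable_chromaticNumber_of_fintype.some v : ℕ)

lemma col_valid {N : ℕ} (G : SimpleGraph (Fin N)) {u v : Fin N} (h : G.Adj u v) :
    col G u ≠ col G v := by
  intro he
  exact G.colorable_chromaticNumber_of_fintype.some.valid h (Fin.val_injective he)

lemma col_lt {N : ℕ} (G : SimpleGraph (Fin N)) (v : Fin N) :
    col G v < G.chromaticNumber.toNat :=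
  (G.colorable_chromaticNumber_of_fintype.some v).isLt

/-! ### Arithmetic layer -/

/-- `gsum s k = s + s^2 + ⋯ + s^k`. -/
def gsum (s : ℕ) : ℕ → ℕ
  | 0 => 0
  | k + 1 => gsum s k + s ^ (k + 1)

/-- The promotion-time chain: `Ech s 1 T = T`, and
`Ech s (j+1) T` is the first multiple of `s^j` strictly above `Ech s j T`. -/
def Ech (s : ℕ) : ℕ → ℕ → ℕ
  | 0, T => T
  | 1, T => T
  | j + 2, T => s ^ (j + 1) * (Ech s (j + 1) T / s ^ (j + 1) + 1)

/-- Start of the current phase of level `ℓ` at time `t`. -/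
def bstart (s ℓ t : ℕ) : ℕ := s ^ (ℓ - 1) * (t / s ^ (ℓ - 1))

/-- Current level of a vertex whose last touch time is `T` (with `T = 0` meaning
never touched). -/
noncomputable def lvlOf (d s t T : ℕ) : ℕ :=
  if 0 < T then Nat.findGreatest (fun ℓ => Ech s ℓ T ≤ t) d else d

/-- The vertex entered its current level exactly at the current phase start. -/
def newOf (s ℓ t T : ℕ) : Prop := 0 < T ∧ Ech s ℓ T = bstart s ℓ t

/-- Transition schedule at level `ℓ`. -/
noncomputable def transAt (d s ℓ t T val : ℕ) : Prop :=
  bstart s ℓ t = 0 ∨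
    (if ℓ = d ∧ ¬ newOf s ℓ t T then val < (t - bstart s ℓ t + 1) * s
     else bstart s ℓ t ≤ T + (t - bstart s ℓ t + 1) * s + gsum s (ℓ - 2))

noncomputable def transOf (d s t T val : ℕ) : Prop :=
  transAt d s (lvlOf d s t T) t T val

/-- Color encoding: block `(ℓ, p)`, index `c`. -/
def enc (d ℓ p c : ℕ) : ℕ := 2 * d * c + 2 * (ℓ - 1) + p + 1

/-- Descriptor of the color of a vertex: `(block level, block parity, timestamp)`. -/
noncomputable def desc (d s t T val : ℕ) : ℕ × ℕ × ℕ :=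
  if transAt d s (lvlOf d s t T) t T val then
    (lvlOf d s t T, t / s ^ (lvlOf d s t T - 1) % 2, bstart s (lvlOf d s t T) t)
  else if newOf s (lvlOf d s t T) t T then
    (lvlOf d s t T - 1, (bstart s (lvlOf d s t T) t / s ^ (lvlOf d s t T - 2) + 1) % 2,
      bstart s (lvlOf d s t T) t - s ^ (lvlOf d s t T - 2))
  else
    (lvlOf d s t T, (t / s ^ (lvlOf d s t T - 1) + 1) % 2,
      bstart s (lvlOf d s t T) t - s ^ (lvlOf d s t T - 1))

/-! ### Basic arithmetic lemmas -/

section Arith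

variable {d s t T val ℓ : ℕ}

lemma Ech_one (T : ℕ) : Ech s 1 T = T := rfl

lemma Ech_succ : ∀ {j : ℕ}, 1 ≤ j →
    ∀ T : ℕ, Ech s (j + 1) T = s ^ j * (Ech s j T / s ^ j + 1)
  | k + 1, _, T => rfl

lemma lt_Ech_succ (hs : 1 ≤ s) {j : ℕ} (hj : 1 ≤ j) (T : ℕ) :
    Ech s j T < Ech s (j + 1) T := by
  rw [Ech_succ hj]
  exact Nat.lt_mul_div_succ _ (Nat.pow_pos hs)

lemma Ech_dvd : ∀ {ℓ : ℕ}, 1 ≤ ℓ → ∀ T : ℕ, s ^ (ℓ - 1) ∣ Ech s ℓ T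
  | 1, _, T => by simp
  | k + 2, _, T => ⟨_, rfl⟩

lemma Ech_mono (hs : 1 ≤ s) {j k : ℕ} (h1 : 1 ≤ j) (hjk : j ≤ k) (T : ℕ) :
    Ech s j T ≤ Ech s k T := by
  induction k with
  | zero => omega
  | succ k ih =>
    rcases Nat.lt_or_ge j (k+1) with h | h
    · exact le_trans (ih (by omega)) (le_of_lt (lt_Ech_succ hs (by omega) T))
    · have : j = k + 1 := by omega
      subst this; exact le_refl _

lemma Ech_le_gsum (hj : 1 ≤ ℓ) (T : ℕ) : Ech s ℓ T ≤ T + gsum s (ℓ - 1) := by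
  induction ℓ with
  | zero => omega
  | succ j ih =>
    rcases Nat.lt_or_ge j 1 with h | h
    · interval_cases j
      · simp [Ech_one, gsum]
    · rw [Ech_succ h]
      have h1 : s ^ j * (Ech s j T / s ^ j + 1) = s ^ j * (Ech s j T / s ^ j) + s ^ j := by ring
      have h2 : s ^ j * (Ech s j T / s ^ j) ≤ Ech s j T := Nat.mul_div_le _ _
      have h3 := ih h
      have h4 : j + 1 - 1 = (j - 1) + 1 := by omega
      rw [h4]
      have h5 : gsum s ((j-1)+1) = gsum s (j-1) + s ^ (j - 1 + 1) := rfl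
      rw [h5, show j - 1 + 1 = j by omega]
      omega

lemma gsum_sub_two_add (h2 : 2 ≤ ℓ) : gsum s (ℓ - 1) = gsum s (ℓ - 2) + s ^ (ℓ - 1) := by
  have h : ℓ - 1 = (ℓ - 2) + 1 := by omega
  rw [h]
  have h5 : gsum s ((ℓ - 2) + 1) = gsum s (ℓ - 2) + s ^ (ℓ - 2 + 1) := rfl
  rw [h5, show ℓ - 2 + 1 = ℓ - 1 by omega]

lemma dvd_add_le_of_lt {c a b : ℕ} (hc : 0 < c) (ha : c ∣ a) (hb : c ∣ b) (h : a < b) :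
    a + c ≤ b := by
  obtain ⟨x, rfl⟩ := ha; obtain ⟨y, rfl⟩ := hb
  have hxy : x < y := by
    by_contra hxy
    push_neg at hxy
    exact absurd (Nat.mul_le_mul_left c hxy) (by omega)
  calc c * x + c = c * (x + 1) := by ring
    _ ≤ c * y := Nat.mul_le_mul_left _ (by omega)

lemma add_gsum_lt_Ech (hs : 1 ≤ s) (h2 : 2 ≤ ℓ) (T : ℕ) :
    T + gsum s (ℓ - 2) < Ech s ℓ T := by
  induction ℓ with
  | zero => omega
  | succ j ih =>
    rcases Nat.lt_or_ge j 2 with h | h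
    · interval_cases j
      · omega
      · simpa [gsum, Ech_one] using lt_Ech_succ hs (le_refl 1) T
    · have hlt : Ech s j T < Ech s (j+1) T := lt_Ech_succ hs (by omega) T
      have hd1 : s ^ (j - 1) ∣ Ech s j T := Ech_dvd (by omega) T
      have hd2 : s ^ (j - 1) ∣ Ech s (j + 1) T := by
        have h6 := Ech_dvd (ℓ := j + 1) (s := s) (by omega) T
        exact dvd_trans (pow_dvd_pow s (by omega)) h6
      have hstep : Ech s j T + s ^ (j - 1) ≤ Ech s (j + 1) T :=
        dvd_add_le_of_lt (Nat.pow_pos hs) hd1 hd2 hlt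
      have hsum : gsum s (j + 1 - 2) = gsum s (j - 2) + s ^ (j - 1) := by
        have h7 : j + 1 - 2 = (j - 2) + 1 := by omega
        rw [h7]
        have h8 : gsum s ((j - 2) + 1) = gsum s (j - 2) + s ^ (j - 2 + 1) := rfl
        rw [h8, show j - 2 + 1 = j - 1 by omega]
      have h9 := ih h
      omega

lemma bstart_le (s ℓ t : ℕ) : bstart s ℓ t ≤ t := Nat.mul_div_le _ _

lemma lt_bstart_add (hs : 1 ≤ s) (ℓ t : ℕ) : t < bstart s ℓ t + s ^ (ℓ - 1) := by
  have h := Nat.lt_mul_div_succ t ((Nat.pow_pos hs : 0 < s ^ (ℓ - 1)))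
  have h2 : s ^ (ℓ - 1) * (t / s ^ (ℓ - 1) + 1)
      = bstart s ℓ t + s ^ (ℓ - 1) := by unfold bstart; ring
  omega

lemma dvd_bstart (s ℓ t : ℕ) : s ^ (ℓ - 1) ∣ bstart s ℓ t := ⟨_, rfl⟩

lemma le_bstart_of_dvd {x : ℕ} (hx : x ≤ t) (hdvd : s ^ (ℓ - 1) ∣ x) (hs : 1 ≤ s) :
    x ≤ bstart s ℓ t := by
  obtain ⟨k, rfl⟩ := hdvd
  have hp : 0 < s ^ (ℓ - 1) := Nat.pow_pos hs
  have h : k ≤ t / s ^ (ℓ - 1) :=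
    (Nat.le_div_iff_mul_le hp).2 (by rw [Nat.mul_comm]; exact hx)
  exact Nat.mul_le_mul_left _ h

end Arith


/-! ### Phase-start lemmas at successor times -/

section Phase

variable {d s t T val ℓ : ℕ}

lemma bstart_succ_dvd (hs : 1 ≤ s) (h : s ^ (ℓ - 1) ∣ (t + 1)) :
    bstart s ℓ (t + 1) = t + 1 ∧ bstart s ℓ t + s ^ (ℓ - 1) = t + 1 := by
  have hp : 0 < s ^ (ℓ - 1) := Nat.pow_pos hs
  have h1 : bstart s ℓ (t + 1) = t + 1 := by
    unfold bstart; exact Nat.mul_div_cancel' h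
  refine ⟨h1, ?_⟩
  have h2 : bstart s ℓ t + s ^ (ℓ - 1) ≤ t + 1 :=
    dvd_add_le_of_lt hp (dvd_bstart s ℓ t) h (lt_of_le_of_lt (bstart_le s ℓ t) (by omega))
  have h3 := lt_bstart_add hs ℓ t
  omega

lemma bstart_succ_not_dvd (h : ¬ s ^ (ℓ - 1) ∣ (t + 1)) :
    bstart s ℓ (t + 1) = bstart s ℓ t := by
  unfold bstart
  rw [Nat.succ_div, if_neg h]
  simp

lemma bstart_one (hs : 1 ≤ s) (t : ℕ) : bstart s 1 t = t := by
  unfold bstart; simp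

/-! ### Level lemmas -/

lemma lvlOf_le (d s t T : ℕ) : lvlOf d s t T ≤ d := by
  unfold lvlOf
  split
  · exact Nat.findGreatest_le d
  · exact le_refl d

lemma lvlOf_untouched (d s t : ℕ) : lvlOf d s t 0 = d := by
  unfold lvlOf; simp

lemma lvlOf_pos (hd : 1 ≤ d) (hT : T ≤ t) : 1 ≤ lvlOf d s t T := by
  unfold lvlOf
  split
  · exact Nat.le_findGreatest hd (by simpa [Ech_one] using hT)
  · exact hd

lemma Ech_lvlOf_le (hd : 1 ≤ d) (h0 : 0 < T) (hT : T ≤ t) :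
    Ech s (lvlOf d s t T) T ≤ t := by
  unfold lvlOf
  rw [if_pos h0]
  exact Nat.findGreatest_spec (P := fun ℓ => Ech s ℓ T ≤ t) hd (by simpa [Ech_one] using hT)

lemma lt_Ech_of_lvlOf_lt (h0 : 0 < T) {k : ℕ} (hk : lvlOf d s t T < k) (hkd : k ≤ d) :
    t < Ech s k T := by
  by_contra hc
  push_neg at hc
  have : k ≤ lvlOf d s t T := by
    unfold lvlOf
    rw [if_pos h0]
    exact Nat.le_findGreatest hkd hc
  omega

lemma lvlOf_mono_t (d s T : ℕ) {t t' : ℕ} (h : t ≤ t') : lvlOf d s t T ≤ lvlOf d s t' T := by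
  unfold lvlOf
  split
  · exact Nat.findGreatest_mono (fun ℓ hℓ => le_trans hℓ h) (le_refl d)
  · exact le_refl d

lemma lvlOf_self (hs : 1 ≤ s) (hd : 1 ≤ d) {t : ℕ} (ht : 0 < t) : lvlOf d s t t = 1 := by
  unfold lvlOf
  rw [if_pos ht]
  rw [Nat.findGreatest_eq_iff]
  refine ⟨hd, fun _ => by simp [Ech_one], fun n h1 hn hc => ?_⟩
  have h3 : t + gsum s (n - 2) < Ech s n t := add_gsum_lt_Ech hs (by omega) t
  omega

lemma lvlOf_succ_cases (hs : 1 ≤ s) (hd : 1 ≤ d) (h0 : 0 < T) (hT : T ≤ t) :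
    lvlOf d s (t + 1) T = lvlOf d s t T ∨
      (lvlOf d s (t + 1) T = lvlOf d s t T + 1 ∧
        Ech s (lvlOf d s (t + 1) T) T = t + 1) := by
  set L := lvlOf d s t T with hL
  set L' := lvlOf d s (t + 1) T with hL'
  have hmono : L ≤ L' := lvlOf_mono_t d s T (Nat.le_succ t)
  rcases eq_or_lt_of_le hmono with h | h
  · exact Or.inl h.symm
  · right
    have hL'd : L' ≤ d := lvlOf_le d s (t+1) T
    have h1 : Ech s L' T ≤ t + 1 := Ech_lvlOf_le hd h0 (by omega)
    have h2 : t < Ech s L' T := lt_Ech_of_lvlOf_lt h0 h hL'd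
    have h3 : L' ≤ L + 1 := by
      by_contra hc
      push_neg at hc
      have h4 : Ech s (L + 1) T < Ech s L' T :=
        lt_of_lt_of_le (lt_Ech_succ (j := L + 1) hs (by omega) T)
          (Ech_mono (j := L + 2) (k := L') hs (by omega) (by omega) T)
      have h5 : t < Ech s (L + 1) T := lt_Ech_of_lvlOf_lt (d := d) h0 (by omega) (by omega)
      omega
    exact ⟨by omega, by omega⟩

end Phase


/-! ### Schedule lemmas: level 1, coverage, deadline -/

section Sched

variable {d s t T val ℓ : ℕ}

lemma pow_le_pow_succ (hs : 1 ≤ s) (j : ℕ) : s ^ j ≤ s ^ (j + 1) :=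
  Nat.pow_le_pow_right hs (Nat.le_succ j)

lemma trans_of_lvl_one (hs : 1 ≤ s) (hd : 1 ≤ d) (hval : val < s ^ d) (hT : T ≤ t)
    (hL : lvlOf d s t T = 1) : transAt d s 1 t T val := by
  unfold transAt
  rw [bstart_one hs]
  rcases Nat.eq_zero_or_pos t with rfl | ht
  · exact Or.inl rfl
  right
  by_cases hifc : 1 = d ∧ ¬ newOf s 1 t T
  · rw [if_pos hifc]
    have : s ^ d = s := by rw [← hifc.1]; simp
    simp only [Nat.sub_self, Nat.zero_add, Nat.one_mul]
    omega
  · rw [if_neg hifc]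
    push_neg at hifc
    by_cases hld : 1 = d
    · have hnew := hifc hld
      unfold newOf at hnew
      rw [Ech_one, bstart_one hs] at hnew
      simp only [Nat.sub_self, Nat.zero_add, Nat.one_mul]
      omega
    · have h0 : 0 < T := by
        rcases Nat.eq_zero_or_pos T with rfl | h
        · rw [lvlOf_untouched] at hL; omega
        · exact h
      have h2 : t < Ech s 2 T := lt_Ech_of_lvlOf_lt (d := d) (s := s) h0 (by omega) (by omega)
      have h3 : Ech s 2 T = s ^ 1 * (Ech s 1 T / s ^ 1 + 1) := Ech_succ (le_refl 1) T
      rw [Ech_one] at h3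
      have h4 : s ^ 1 * (T / s ^ 1) ≤ T := Nat.mul_div_le _ _
      have h5 : s ^ 1 * (T / s ^ 1 + 1) = s ^ 1 * (T / s ^ 1) + s ^ 1 := by ring
      have h6 : s ^ 1 = s := pow_one s
      simp only [Nat.sub_self, Nat.zero_add, Nat.one_mul]
      omega

lemma coverage (hs : 1 ≤ s) (hd : 1 ≤ d) (hval : val < s ^ d) (hT : T ≤ t)
    (hL : lvlOf d s t T = ℓ) (hend : s ^ (ℓ - 1) ∣ (t + 1)) : transAt d s ℓ t T val := by
  have hℓ1 : 1 ≤ ℓ := hL ▸ lvlOf_pos hd hT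
  have hℓd : ℓ ≤ d := hL ▸ lvlOf_le d s t T
  rcases Nat.lt_or_ge ℓ 2 with h2 | h2
  · have : ℓ = 1 := by omega
    subst this
    exact trans_of_lvl_one hs hd hval hT hL
  unfold transAt
  by_cases hb : bstart s ℓ t = 0
  · exact Or.inl hb
  right
  set P := s ^ (ℓ - 1) with hP
  set b := bstart s ℓ t with hbdef
  have hbP : b + P = t + 1 := (bstart_succ_dvd hs hend).2
  have hble : b ≤ t := bstart_le s ℓ t
  have hbt : t - b + 1 = P := by omega
  rw [hbt]
  have hPs : P * s = s ^ ℓ := by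
    rw [hP, ← pow_succ]
    congr 1
    omega
  by_cases hifc : ℓ = d ∧ ¬ newOf s ℓ t T
  · rw [if_pos hifc]
    rw [hPs, hifc.1]
    exact hval
  · rw [if_neg hifc]
    push_neg at hifc
    have hgs : gsum s (ℓ - 1) = gsum s (ℓ - 2) + P := gsum_sub_two_add h2
    by_cases hld : ℓ = d
    · have hnew := hifc hld
      have hEb : Ech s ℓ T = b := hnew.2
      have h7 : Ech s ℓ T ≤ T + gsum s (ℓ - 1) := Ech_le_gsum hℓ1 T
      have hPle : P ≤ P * s := Nat.le_mul_of_pos_right P hs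
      omega
    · have h0 : 0 < T := by
        rcases Nat.eq_zero_or_pos T with rfl | h
        · rw [lvlOf_untouched] at hL; omega
        · exact h
      have hE : Ech s ℓ T ≤ t := hL ▸ Ech_lvlOf_le hd h0 hT
      have hE' : t < Ech s (ℓ + 1) T :=
        lt_Ech_of_lvlOf_lt (d := d) (s := s) h0 (by omega) (by omega)
      set B := bstart s (ℓ + 1) t with hBdef
      have hBeq : B = s ^ ℓ * (t / s ^ ℓ) := rfl
      have hsl : 0 < s ^ ℓ := Nat.pow_pos hs
      have hEB : B ≤ Ech s ℓ T := by
        by_contra hc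
        push_neg at hc
        have hdiv : Ech s ℓ T / s ^ ℓ < t / s ^ ℓ := by
          rw [Nat.div_lt_iff_lt_mul hsl]
          calc Ech s ℓ T < B := hc
            _ = (t / s ^ ℓ) * s ^ ℓ := by rw [hBeq]; ring
        have h8 : Ech s (ℓ + 1) T ≤ B := by
          rw [Ech_succ (by omega) T, hBeq]
          exact Nat.mul_le_mul_left _ (by omega)
        have h9 : B ≤ t := bstart_le s (ℓ + 1) t
        omega
      have hbB : b + P ≤ B + s ^ ℓ := by
        apply dvd_add_le_of_lt (Nat.pow_pos hs) (dvd_bstart s ℓ t)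
        · apply Nat.dvd_add
          · exact dvd_trans (pow_dvd_pow s (by omega)) ⟨_, hBeq⟩
          · exact pow_dvd_pow s (by omega)
        · have h11 : t < B + s ^ ℓ := lt_bstart_add hs (ℓ + 1) t
          omega
      have h7 : Ech s ℓ T ≤ T + gsum s (ℓ - 1) := Ech_le_gsum hℓ1 T
      omega

lemma lvl_two_of_untrans (hs : 1 ≤ s) (hd : 1 ≤ d) (hval : val < s ^ d) (hT : T ≤ t)
    (hL : lvlOf d s t T = ℓ) (hun : ¬ transAt d s ℓ t T val) : 2 ≤ ℓ := by
  by_contra hc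
  push_neg at hc
  have hℓ1 : 1 ≤ ℓ := hL ▸ lvlOf_pos hd hT
  have : ℓ = 1 := by omega
  subst this
  exact hun (trans_of_lvl_one hs hd hval hT hL)

lemma deadline (hs : 1 ≤ s) (h2 : 2 ≤ ℓ) (hnew : newOf s ℓ t T)
    (hun : ¬ transAt d s ℓ t T val) :
    t - bstart s ℓ t + 1 < s ^ (ℓ - 2) ∧ bstart s (ℓ - 1) t = bstart s ℓ t := by
  unfold transAt at hun
  push_neg at hun
  obtain ⟨hb, hun⟩ := hun
  have hifc : ¬ (ℓ = d ∧ ¬ newOf s ℓ t T) := by simp [hnew]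
  rw [if_neg hifc] at hun
  push_neg at hun
  set P := s ^ (ℓ - 1) with hP
  set b := bstart s ℓ t with hbdef
  have hEb : Ech s ℓ T = b := hnew.2
  have h7 : Ech s ℓ T ≤ T + gsum s (ℓ - 1) := Ech_le_gsum (by omega) T
  have hgs : gsum s (ℓ - 1) = gsum s (ℓ - 2) + P := gsum_sub_two_add h2
  have hkey : (t - b + 1) * s < s ^ (ℓ - 2) * s := by
    have hPs : s ^ (ℓ - 2) * s = P := by
      rw [hP, ← pow_succ]
      congr 1
      omega
    omega
  have hfirst : t - b + 1 < s ^ (ℓ - 2) := lt_of_mul_lt_mul_right hkey (Nat.zero_le s)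
  refine ⟨hfirst, ?_⟩
  have hdvd2 : s ^ ((ℓ - 1) - 1) ∣ b := by
    rw [show (ℓ - 1) - 1 = ℓ - 2 by omega]
    exact dvd_trans (pow_dvd_pow s (by omega)) (dvd_bstart s ℓ t)
  have hble : b ≤ t := bstart_le s ℓ t
  have h8 : b ≤ bstart s (ℓ - 1) t := le_bstart_of_dvd hble hdvd2 hs
  have h9 : bstart s (ℓ - 1) t ≤ t := bstart_le s (ℓ - 1) t
  by_contra hc
  have h10 : b < bstart s (ℓ - 1) t := by omega
  have h11 : b + s ^ (ℓ - 2) ≤ bstart s (ℓ - 1) t := by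
    have := dvd_add_le_of_lt (c := s ^ (ℓ - 2)) (Nat.pow_pos hs)
      (by rw [show ℓ - 2 = (ℓ - 1) - 1 by omega]; exact hdvd2)
      (by rw [show ℓ - 2 = (ℓ - 1) - 1 by omega]; exact dvd_bstart s (ℓ - 1) t) h10
    exact this
  omega

end Sched


/-! ### Descriptor lemmas -/

/-- The timestamp determined by a block `(ℓ, p)` and the time `t`. -/
def betaFun (s ℓ p t : ℕ) : ℕ :=
  if t / s ^ (ℓ - 1) % 2 = p then bstart s ℓ t else bstart s ℓ t - s ^ (ℓ - 1)

section Desc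

variable {d s t T val : ℕ}

lemma mod_two_succ_ne (q : ℕ) : q % 2 ≠ (q + 1) % 2 := by omega

lemma T_le_Ech (hs : 1 ≤ s) {ℓ : ℕ} (h1 : 1 ≤ ℓ) (T : ℕ) : T ≤ Ech s ℓ T := by
  have := Ech_mono hs (le_refl 1) h1 T
  rwa [Ech_one] at this

lemma desc_level (hs : 1 ≤ s) (hd : 1 ≤ d) (hval : val < s ^ d) (hT : T ≤ t) :
    1 ≤ (desc d s t T val).1 ∧ (desc d s t T val).1 ≤ d := by
  have h1 : 1 ≤ lvlOf d s t T := lvlOf_pos hd hT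
  have h2 : lvlOf d s t T ≤ d := lvlOf_le d s t T
  unfold desc
  split_ifs with ht hn
  · exact ⟨h1, h2⟩
  · have := lvl_two_of_untrans hs hd hval hT rfl ht
    constructor <;> simp only <;> omega
  · exact ⟨h1, h2⟩

lemma desc_parity : (desc d s t T val).2.1 < 2 := by
  unfold desc
  split_ifs <;> exact Nat.mod_lt _ (by omega)

lemma desc_beta_le : (desc d s t T val).2.2 ≤ t := by
  have hb := bstart_le s (lvlOf d s t T) t
  unfold desc
  split_ifs <;> simp only <;> omega

lemma desc_beta_ge (hs : 1 ≤ s) (hd : 1 ≤ d) (hval : val < s ^ d) (hT : T ≤ t)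
    (h0 : 0 < T) : T ≤ (desc d s t T val).2.2 := by
  have h1 : 1 ≤ lvlOf d s t T := lvlOf_pos hd hT
  have h2 : lvlOf d s t T ≤ d := lvlOf_le d s t T
  have hE : Ech s (lvlOf d s t T) T ≤ t := Ech_lvlOf_le hd h0 hT
  have hEb : Ech s (lvlOf d s t T) T ≤ bstart s (lvlOf d s t T) t :=
    le_bstart_of_dvd hE (Ech_dvd h1 T) hs
  have hTE : T ≤ Ech s (lvlOf d s t T) T := T_le_Ech hs h1 T
  unfold desc
  split_ifs with ht hn
  · simp only
    omega
  · -- new, untransitioned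
    have hℓ2 : 2 ≤ lvlOf d s t T := lvl_two_of_untrans hs hd hval hT rfl ht
    have hlt : Ech s (lvlOf d s t T - 1) T < Ech s (lvlOf d s t T) T := by
      have h3 := lt_Ech_succ hs (j := lvlOf d s t T - 1) (by omega) T
      rwa [show lvlOf d s t T - 1 + 1 = lvlOf d s t T by omega] at h3
    have hdvd1 : s ^ (lvlOf d s t T - 2) ∣ Ech s (lvlOf d s t T - 1) T := by
      have h3 := Ech_dvd (ℓ := lvlOf d s t T - 1) (s := s) (by omega) T
      rwa [show lvlOf d s t T - 1 - 1 = lvlOf d s t T - 2 by omega] at h3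
    have hdvd2 : s ^ (lvlOf d s t T - 2) ∣ bstart s (lvlOf d s t T) t :=
      dvd_trans (pow_dvd_pow s (by omega)) (dvd_bstart s (lvlOf d s t T) t)
    have hle : Ech s (lvlOf d s t T - 1) T + s ^ (lvlOf d s t T - 2)
        ≤ bstart s (lvlOf d s t T) t := by
      apply dvd_add_le_of_lt (Nat.pow_pos hs) hdvd1 hdvd2
      rw [← hn.2]; exact hlt
    have hTE1 : T ≤ Ech s (lvlOf d s t T - 1) T := T_le_Ech hs (by omega) T
    simp only
    omega
  · -- old, untransitioned
    have hℓ2 : 2 ≤ lvlOf d s t T := lvl_two_of_untrans hs hd hval hT rfl ht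
    have hne : Ech s (lvlOf d s t T) T ≠ bstart s (lvlOf d s t T) t := by
      intro hc
      exact hn ⟨h0, hc⟩
    have hle : Ech s (lvlOf d s t T) T + s ^ (lvlOf d s t T - 1)
        ≤ bstart s (lvlOf d s t T) t :=
      dvd_add_le_of_lt (Nat.pow_pos hs) (Ech_dvd h1 T)
        (dvd_bstart s (lvlOf d s t T) t) (lt_of_le_of_ne hEb hne)
    simp only
    omega

/-- Uniformity: the timestamp is determined by the block and the time. -/
lemma desc_beta_formula (hs : 1 ≤ s) (hd : 1 ≤ d) (hval : val < s ^ d) (hT : T ≤ t) :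
    (desc d s t T val).2.2 = betaFun s (desc d s t T val).1 (desc d s t T val).2.1 t := by
  unfold desc
  split_ifs with ht hn
  · simp [betaFun]
  · -- new, untransitioned
    have hℓ2 : 2 ≤ lvlOf d s t T := lvl_two_of_untrans hs hd hval hT rfl ht
    obtain ⟨hdl, hbeq⟩ := deadline hs hℓ2 hn ht
    have hp : 0 < s ^ (lvlOf d s t T - 2) := Nat.pow_pos hs
    have hq : t / s ^ (lvlOf d s t T - 2) = bstart s (lvlOf d s t T) t / s ^ (lvlOf d s t T - 2) := by
      have h3 : s ^ (lvlOf d s t T - 2) * (t / s ^ (lvlOf d s t T - 2))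
          = bstart s (lvlOf d s t T) t := by
        have h4 : bstart s (lvlOf d s t T - 1) t
            = s ^ (lvlOf d s t T - 1 - 1) * (t / s ^ (lvlOf d s t T - 1 - 1)) := rfl
        rw [h4, show lvlOf d s t T - 1 - 1 = lvlOf d s t T - 2 by omega] at hbeq
        exact hbeq
      conv_rhs => rw [← h3]
      rw [Nat.mul_div_cancel_left _ hp]
    simp only [betaFun, show lvlOf d s t T - 1 - 1 = lvlOf d s t T - 2 by omega, hq]
    rw [if_neg (mod_two_succ_ne _), hbeq]
  · simp only [betaFun, if_neg (mod_two_succ_ne _)]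

end Desc


/-! ### Change windows and the stability lemma -/

/-- Window of touch-times that are newly transitioned at step `t+1` at level `ℓ`. -/
def XT (s t ℓ T : ℕ) : Prop :=
  0 < T ∧
    T + ((t + 1) - bstart s ℓ (t + 1)) * s + gsum s (ℓ - 2) < bstart s ℓ (t + 1) ∧
    bstart s ℓ (t + 1) ≤ T + ((t + 1) - bstart s ℓ (t + 1) + 1) * s + gsum s (ℓ - 2)

/-- Window of vertex indices newly transitioned at step `t+1` on the index schedule. -/
def XV (s d t val : ℕ) : Prop :=
  ((t + 1) - bstart s d (t + 1)) * s ≤ val ∧ val < ((t + 1) - bstart s d (t + 1) + 1) * s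

section Stable

variable {d s t T val : ℕ}

lemma succ_div_of_dvd {P : ℕ} (h : P ∣ (t + 1)) : (t + 1) / P = t / P + 1 := by
  rw [Nat.succ_div, if_pos h]

/-- If the vertex is untouched at step `t+1` and is in none of the windows, its
descriptor does not change. -/
lemma desc_stable (hs : 1 ≤ s) (hd : 1 ≤ d) (hval : val < s ^ d) (hT : T ≤ t)
    (hL1 : lvlOf d s (t + 1) T ≠ 1)
    (hXT : ¬ XT s t (lvlOf d s (t + 1) T) T)
    (hXV : ¬ XV s d t val) :
    desc d s (t + 1) T val = desc d s t T val := by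
  have hT' : T ≤ t + 1 := by omega
  have hcases : lvlOf d s (t + 1) T = lvlOf d s t T ∨
      (lvlOf d s (t + 1) T = lvlOf d s t T + 1 ∧
        Ech s (lvlOf d s (t + 1) T) T = t + 1 ∧ 0 < T) := by
    rcases Nat.eq_zero_or_pos T with rfl | h0
    · left; rw [lvlOf_untouched, lvlOf_untouched]
    · rcases lvlOf_succ_cases hs hd h0 hT with h | h
      · exact Or.inl h
      · exact Or.inr ⟨h.1, h.2, h0⟩
  have hl1 : 1 ≤ lvlOf d s t T := lvlOf_pos hd hT
  have hl1' : 1 ≤ lvlOf d s (t + 1) T := lvlOf_pos hd hT'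
  have hld : lvlOf d s t T ≤ d := lvlOf_le d s t T
  have hld' : lvlOf d s (t + 1) T ≤ d := lvlOf_le d s (t + 1) T
  rcases hcases with hA | hB
  · -- same level
    set ℓ := lvlOf d s t T with hLdef
    have hl2 : 2 ≤ ℓ := by omega
    -- key facts about Ech at level ℓ
    have hEle : 0 < T → Ech s ℓ T ≤ t := fun h0 => Ech_lvlOf_le hd h0 hT
    by_cases hdvd : s ^ (ℓ - 1) ∣ (t + 1)
    · -- phase boundary
      obtain ⟨hb'eq, hbP⟩ := bstart_succ_dvd hs hdvd
      have htr : transAt d s ℓ t T val := coverage hs hd hval hT hLdef.symm hdvd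
      have hb'pos : bstart s ℓ (t + 1) ≠ 0 := by omega
      -- not transitioned at t+1
      have hntr' : ¬ transAt d s ℓ (t + 1) T val := by
        intro htr'
        unfold transAt at htr'
        rcases htr' with h | h
        · exact hb'pos h
        · rw [hb'eq] at h
          simp only [Nat.sub_self, Nat.zero_add, Nat.one_mul] at h
          by_cases hifc : ℓ = d ∧ ¬ newOf s ℓ (t + 1) T
          · rw [if_pos hifc] at h
            apply hXV
            unfold XV
            rw [← hifc.1, hb'eq]
            simp only [Nat.sub_self, Nat.zero_add, Nat.one_mul, Nat.zero_mul]
            omega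
          · rw [if_neg hifc] at h
            have h0 : 0 < T := by
              rcases Nat.eq_zero_or_pos T with rfl | h0
              · exfalso
                apply hifc
                refine ⟨by rw [← hLdef, lvlOf_untouched] at *; omega, ?_⟩
                intro hnew
                exact absurd hnew.1 (by omega)
              · exact h0
            apply hXT
            rw [hA]
            refine ⟨h0, ?_, ?_⟩
            · rw [hb'eq]
              simp only [Nat.sub_self, Nat.zero_mul, Nat.zero_add]
              have := add_gsum_lt_Ech hs hl2 T
              have := hEle h0
              omega
            · rw [hb'eq]
              simp only [Nat.sub_self, Nat.zero_add, Nat.one_mul]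
              omega
      -- not new at t+1
      have hnnew' : ¬ newOf s ℓ (t + 1) T := by
        intro hnew
        have h0 := hnew.1
        have h5 := hEle h0
        have h6 := hnew.2
        rw [hb'eq] at h6
        omega
      -- compute both descriptors
      have hP1 : (t + 1) / s ^ (ℓ - 1) = t / s ^ (ℓ - 1) + 1 := succ_div_of_dvd hdvd
      unfold desc
      rw [hA, ← hLdef, if_neg hntr', if_neg hnnew', if_pos htr]
      refine Prod.ext ?_ (Prod.ext ?_ ?_)
      · rfl
      · simp only [hP1]; omega
      · simp only [hb'eq]; omega
    · -- mid-phase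
      have hb'b : bstart s ℓ (t + 1) = bstart s ℓ t := bstart_succ_not_dvd hdvd
      have hdiv : (t + 1) / s ^ (ℓ - 1) = t / s ^ (ℓ - 1) := by
        rw [Nat.succ_div, if_neg hdvd]; simp
      have hnew_iff : newOf s ℓ (t + 1) T ↔ newOf s ℓ t T := by
        unfold newOf; rw [hb'b]
      by_cases htr : transAt d s ℓ t T val
      · have htr' : transAt d s ℓ (t + 1) T val := by
          unfold transAt at htr ⊢
          rw [hb'b]
          rcases htr with h | h
          · exact Or.inl h
          · right
            by_cases hifc : ℓ = d ∧ ¬ newOf s ℓ t T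
            · rw [if_pos hifc] at h
              rw [if_pos (by rw [hnew_iff]; exact hifc)]
              have hble : bstart s ℓ t ≤ t := bstart_le s ℓ t
              have : (t - bstart s ℓ t + 1) * s ≤ (t + 1 - bstart s ℓ t + 1) * s :=
                Nat.mul_le_mul_right s (by omega)
              omega
            · rw [if_neg hifc] at h
              rw [if_neg (by rw [hnew_iff]; exact hifc)]
              have hble : bstart s ℓ t ≤ t := bstart_le s ℓ t
              have : (t - bstart s ℓ t + 1) * s ≤ (t + 1 - bstart s ℓ t + 1) * s :=
                Nat.mul_le_mul_right s (by omega)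
              omega
        unfold desc
        rw [hA, ← hLdef, if_pos htr, if_pos htr']
        rw [hb'b, hdiv]
      · have hntr' : ¬ transAt d s ℓ (t + 1) T val := by
          intro htr'
          unfold transAt at htr htr'
          push_neg at htr
          obtain ⟨hb0, htr⟩ := htr
          rcases htr' with h | h
          · rw [hb'b] at h; exact hb0 h
          · have hble : bstart s ℓ t ≤ t := bstart_le s ℓ t
            by_cases hifc : ℓ = d ∧ ¬ newOf s ℓ t T
            · rw [if_pos hifc] at htr
              rw [hb'b, if_pos (by rw [hnew_iff]; exact hifc)] at h
              apply hXV
              unfold XV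
              rw [← hifc.1, hb'b]
              have hble2 : bstart s ℓ t ≤ t := bstart_le s ℓ t
              have heq2 : t + 1 - bstart s ℓ t = t - bstart s ℓ t + 1 := by omega
              refine ⟨?_, ?_⟩
              · rw [heq2]; omega
              · rw [heq2, show t - bstart s ℓ t + 1 + 1 = t + 1 - bstart s ℓ t + 1 from by omega]
                exact h
            · rw [if_neg hifc] at htr
              rw [hb'b, if_neg (by rw [hnew_iff]; exact hifc)] at h
              have h0 : 0 < T := by
                rcases Nat.eq_zero_or_pos T with rfl | h0
                · exfalso
                  apply hifc
                  refine ⟨by rw [← hLdef, lvlOf_untouched] at *; omega, ?_⟩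
                  intro hnew
                  exact absurd hnew.1 (by omega)
                · exact h0
              apply hXT
              rw [hA]
              unfold XT
              rw [hb'b]
              refine ⟨h0, ?_, ?_⟩
              · have : t + 1 - bstart s ℓ t = t - bstart s ℓ t + 1 := by omega
                rw [this]
                omega
              · exact h
        unfold desc
        rw [hA, ← hLdef, if_neg hntr', if_neg htr]
        by_cases hnew : newOf s ℓ t T
        · rw [if_pos hnew, if_pos (hnew_iff.2 hnew), hb'b]
        · rw [if_neg hnew, if_neg (fun h => hnew (hnew_iff.1 h)), hb'b, hdiv]
  · -- promotion
    obtain ⟨hBl, hBe, h0⟩ := hB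
    set ℓ' := lvlOf d s (t + 1) T with hL'def
    set ℓ := lvlOf d s t T with hLdef
    have hl2' : 2 ≤ ℓ' := by omega
    have hdvd' : s ^ (ℓ' - 1) ∣ (t + 1) := hBe ▸ Ech_dvd (by omega) T
    obtain ⟨hb'eq, hbP'⟩ := bstart_succ_dvd hs hdvd'
    have hnew' : newOf s ℓ' (t + 1) T := ⟨h0, by rw [hb'eq, hBe]⟩
    have hntr' : ¬ transAt d s ℓ' (t + 1) T val := by
      intro htr'
      unfold transAt at htr'
      rcases htr' with h | h
      · omega
      · have hifc : ¬ (ℓ' = d ∧ ¬ newOf s ℓ' (t + 1) T) := by simp [hnew']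
        rw [if_neg hifc] at h
        apply hXT
        refine ⟨h0, ?_, ?_⟩
        · rw [hb'eq]
          simp only [Nat.sub_self, Nat.zero_mul, Nat.zero_add]
          have h5 := add_gsum_lt_Ech hs hl2' T
          omega
        · exact h
    have hdvdℓ : s ^ (ℓ - 1) ∣ (t + 1) :=
      dvd_trans (pow_dvd_pow s (by omega)) hdvd'
    have htr : transAt d s ℓ t T val := coverage hs hd hval hT hLdef.symm hdvdℓ
    obtain ⟨hbeq2, hbP2⟩ := bstart_succ_dvd hs hdvdℓ
    have hP1 : (t + 1) / s ^ (ℓ - 1) = t / s ^ (ℓ - 1) + 1 := succ_div_of_dvd hdvdℓ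
    have hexp : ℓ' - 2 = ℓ - 1 := by omega
    unfold desc
    simp only [← hLdef, ← hL'def]
    rw [if_neg hntr', if_pos hnew', if_pos htr]
    refine Prod.ext ?_ (Prod.ext ?_ ?_)
    · simp only
      omega
    · simp only [hexp, hb'eq, hP1]
      omega
    · simp only [hexp, hb'eq]
      omega

end Stable

/-! ### Touch times -/

variable {N : ℕ}

/-- `v` gained a new incident edge at step `τ`. -/
def newAdj (F : ℕ → SimpleGraph (Fin N)) (τ : ℕ) (v : Fin N) : Prop :=
  ∃ w, (F τ).Adj v w ∧ ¬ (F (τ - 1)).Adj v w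

/-- `v` is the designated (minimal) endpoint of an edge inserted at step `τ`. -/
def tch (F : ℕ → SimpleGraph (Fin N)) (τ : ℕ) (v : Fin N) : Prop :=
  newAdj F τ v ∧ ∀ w, newAdj F τ w → v ≤ w

/-- Last touch time of `v` up to time `t` (0 if never touched). -/
noncomputable def Tt (F : ℕ → SimpleGraph (Fin N)) (t : ℕ) (v : Fin N) : ℕ :=
  @Nat.findGreatest (fun τ => tch F τ v) (Classical.decPred _) t


/-! ### Properties of touch times -/

section Touch

variable {d s : ℕ} {N : ℕ} {F : ℕ → SimpleGraph (Fin N)} {t τ : ℕ} {u v w : Fin N}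

lemma tch_zero (v : Fin N) : ¬ tch F 0 v := by
  rintro ⟨⟨w, hw1, hw2⟩, -⟩
  simp only [Nat.zero_sub] at hw2
  exact hw2 hw1

lemma Tt_le (F : ℕ → SimpleGraph (Fin N)) (t : ℕ) (v : Fin N) : Tt F t v ≤ t :=
  Nat.findGreatest_le t

lemma Tt_ge (htch : tch F τ v) (hτ : τ ≤ t) : τ ≤ Tt F t v :=
  Nat.le_findGreatest hτ htch

lemma Tt_spec (h : 0 < Tt F t v) : tch F (Tt F t v) v := by
  classical
  have := (Nat.findGreatest_eq_iff (P := fun τ => tch F τ v) (k := t)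
    (m := Tt F t v)).1 rfl
  exact this.2.1 (by omega)

lemma tch_unique (hu : tch F τ u) (hv : tch F τ v) : u = v :=
  le_antisymm (hu.2 v hv.1) (hv.2 u hu.1)

lemma Tt_inj (hu : 0 < Tt F t u) (heq : Tt F t u = Tt F t v) : u = v :=
  tch_unique (Tt_spec hu) (heq ▸ Tt_spec (heq ▸ hu))

lemma Tt_succ_of_not (h : ¬ tch F (t + 1) v) : Tt F (t + 1) v = Tt F t v := by
  classical
  unfold Tt
  rw [Nat.findGreatest_succ, if_neg h]

lemma Tt_succ_of (h : tch F (t + 1) v) : Tt F (t + 1) v = t + 1 := by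
  classical
  unfold Tt
  rw [Nat.findGreatest_succ, if_pos h]

end Touch

/-! ### Properness -/

section Proper

variable {d s : ℕ} {N : ℕ} {F : ℕ → SimpleGraph (Fin N)} {t τ β : ℕ} {u v w : Fin N}

lemma enc_inj (hd : 1 ≤ d) {ℓ1 p1 c1 ℓ2 p2 c2 : ℕ}
    (h11 : 1 ≤ ℓ1) (h1d : ℓ1 ≤ d) (hp1 : p1 < 2)
    (h21 : 1 ≤ ℓ2) (h2d : ℓ2 ≤ d) (hp2 : p2 < 2)
    (h : enc d ℓ1 p1 c1 = enc d ℓ2 p2 c2) : ℓ1 = ℓ2 ∧ p1 = p2 ∧ c1 = c2 := by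
  unfold enc at h
  have e1 : 2 * (ℓ1 - 1) + p1 < 2 * d := by omega
  have e2 : 2 * (ℓ2 - 1) + p2 < 2 * d := by omega
  have hc : c1 = c2 := by
    rcases lt_trichotomy c1 c2 with h' | h' | h'
    · exfalso
      have h2 := Nat.mul_le_mul_left (2 * d) (Nat.succ_le_of_lt h')
      rw [Nat.mul_succ] at h2
      omega
    · exact h'
    · exfalso
      have h2 := Nat.mul_le_mul_left (2 * d) (Nat.succ_le_of_lt h')
      rw [Nat.mul_succ] at h2
      omega
  subst hc
  omega

lemma exists_insertion (hβ : β ≤ t) (hadj : (F t).Adj u v) (hnadj : ¬ (F β).Adj u v) :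
    ∃ τ, β < τ ∧ τ ≤ t ∧ (F τ).Adj u v ∧ ¬ (F (τ - 1)).Adj u v := by
  induction t with
  | zero =>
    have : β = 0 := by omega
    subst this
    exact absurd hadj hnadj
  | succ t ih =>
    rcases Nat.lt_or_ge β (t + 1) with h | h
    · by_cases h2 : (F t).Adj u v
      · obtain ⟨τ, h3, h4, h5, h6⟩ := ih (by omega) h2
        exact ⟨τ, h3, by omega, h5, h6⟩
      · exact ⟨t + 1, by omega, le_refl _, hadj, by simpa using h2⟩
    · have : β = t + 1 := by omega
      subst this
      exact absurd hadj hnadj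

lemma newAdj_iff (hτ : 1 ≤ τ) (hne : u ≠ v) (hnadj : ¬ (F (τ - 1)).Adj u v)
    (hH : F τ = F (τ - 1) ⊔ SimpleGraph.fromEdgeSet {s(u, v)}) (w : Fin N) :
    newAdj F τ w ↔ (w = u ∨ w = v) := by
  unfold newAdj
  constructor
  · rintro ⟨x, hx1, hx2⟩
    rw [hH] at hx1
    rcases hx1 with hx1 | hx1
    · exact absurd hx1 hx2
    · rw [SimpleGraph.fromEdgeSet_adj, Set.mem_singleton_iff, Sym2.eq_iff] at hx1
      rcases hx1.1 with ⟨rfl, rfl⟩ | ⟨rfl, rfl⟩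
      · exact Or.inl rfl
      · exact Or.inr rfl
  · have hadj : (F τ).Adj u v := by
      rw [hH]
      right
      rw [SimpleGraph.fromEdgeSet_adj]
      exact ⟨Set.mem_singleton _, hne⟩
    rintro (rfl | rfl)
    · exact ⟨v, hadj, hnadj⟩
    · exact ⟨u, hadj.symm, fun h => hnadj h.symm⟩

lemma touched_of_insert (hτ : 1 ≤ τ) (hstep : isStep (F (τ - 1)) (F τ))
    (hadj : (F τ).Adj u v) (hnadj : ¬ (F (τ - 1)).Adj u v) :
    ∃ w, tch F τ w ∧ (w = u ∨ w = v) := by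
  obtain ⟨a, b, hab, hcase⟩ := hstep
  rcases hcase with ⟨hnadj2, hsup⟩ | ⟨hadj2, hsdiff⟩
  · -- insertion of s(a,b)
    have hiff := fun w => newAdj_iff hτ hab hnadj2 hsup w
    -- the inserted edge must be {u,v}
    have huv : (u = a ∨ u = b) := (hiff u).1 ⟨v, hadj, hnadj⟩
    have hvv : (v = a ∨ v = b) := (hiff v).1 ⟨u, hadj.symm, fun h => hnadj h.symm⟩
    set w0 := if a ≤ b then a else b with hw0
    have hw0ab : w0 = a ∨ w0 = b := by
      unfold w0; split <;> simp
    have htch : tch F τ w0 := by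
      constructor
      · rcases hw0ab with h | h <;> rw [h, hiff] <;> simp
      · intro x hx
        rw [hiff] at hx
        rcases hx with rfl | rfl <;> unfold w0 <;> split <;> omega
    -- w0 ∈ {u, v}
    have : w0 = u ∨ w0 = v := by
      have hne : u ≠ v := (F τ).ne_of_adj hadj
      rcases huv with rfl | rfl <;> rcases hvv with rfl | rfl <;>
        first
        | exact absurd rfl hne
        | (rcases hw0ab with h | h <;> [exact Or.inl h; exact Or.inr h])
        | (rcases hw0ab with h | h <;> [exact Or.inr h; exact Or.inl h])
    exact ⟨w0, htch, this⟩
  · -- deletion: impossible since the edge is present after the step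
    rw [hsdiff] at hadj
    exact absurd hadj.1 hnadj

end Proper

/-- The algorithm's coloring at time `t`. -/
noncomputable def fcol (d s : ℕ) (F : ℕ → SimpleGraph (Fin N)) (t : ℕ) (v : Fin N) : ℕ :=
  enc d (desc d s t (Tt F t v) v.val).1 (desc d s t (Tt F t v) v.val).2.1
    (col (F (desc d s t (Tt F t v) v.val).2.2) v)


section Main

variable {d s : ℕ} {N : ℕ} {F : ℕ → SimpleGraph (Fin N)} {t τ β : ℕ} {u v w : Fin N}

lemma fcol_proper (hs : 1 ≤ s) (hd : 1 ≤ d) (hNs : N ≤ s ^ d) (F : ℕ → SimpleGraph (Fin N))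
    (t : ℕ) (hsteps : ∀ τ < t, isStep (F τ) (F (τ + 1))) :
    IsProperNat (F t) (fcol d s F t) := by
  intro u v hadj heq
  have hvalu : (u : ℕ) < s ^ d := lt_of_lt_of_le u.isLt hNs
  have hvalv : (v : ℕ) < s ^ d := lt_of_lt_of_le v.isLt hNs
  have hTu := Tt_le F t u
  have hTv := Tt_le F t v
  unfold fcol at heq
  obtain ⟨hlu1, hlud⟩ := desc_level (val := (u : ℕ)) (T := Tt F t u) hs hd hvalu hTu
  obtain ⟨hlv1, hlvd⟩ := desc_level (val := (v : ℕ)) (T := Tt F t v) hs hd hvalv hTv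
  have hpu := desc_parity (d := d) (s := s) (t := t) (T := Tt F t u) (val := (u : ℕ))
  have hpv := desc_parity (d := d) (s := s) (t := t) (T := Tt F t v) (val := (v : ℕ))
  obtain ⟨hle, hpe, hce⟩ := enc_inj hd hlu1 hlud hpu hlv1 hlvd hpv heq
  -- the timestamps agree
  have hβ : (desc d s t (Tt F t u) (u : ℕ)).2.2 = (desc d s t (Tt F t v) (v : ℕ)).2.2 := by
    rw [desc_beta_formula hs hd hvalu hTu, desc_beta_formula hs hd hvalv hTv, hle, hpe]
  set β := (desc d s t (Tt F t v) (v : ℕ)).2.2 with hβdef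
  rw [hβ] at hce
  have hβt : β ≤ t := desc_beta_le
  by_cases hadjβ : (F β).Adj u v
  · exact col_valid (F β) hadjβ hce
  · obtain ⟨τ, hτ1, hτ2, hτ3, hτ4⟩ := exists_insertion hβt hadj hadjβ
    have hstep : isStep (F (τ - 1)) (F τ) := by
      have h5 := hsteps (τ - 1) (by omega)
      rwa [show τ - 1 + 1 = τ by omega] at h5
    obtain ⟨w, hw1, hw2⟩ := touched_of_insert (by omega) hstep hτ3 hτ4
    have hTw : τ ≤ Tt F t w := Tt_ge hw1 hτ2
    have hβw : Tt F t w ≤ β := by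
      rcases hw2 with rfl | rfl
      · exact hβ ▸ desc_beta_ge hs hd hvalu hTu (by omega)
      · exact desc_beta_ge hs hd hvalv hTv (by omega)
    omega



lemma fcol_pos (d s : ℕ) (F : ℕ → SimpleGraph (Fin N)) (t : ℕ) (v : Fin N) :
    1 ≤ fcol d s F t v := by
  unfold fcol enc
  omega

lemma fcol_le (hs : 1 ≤ s) (hd : 1 ≤ d) (hNs : N ≤ s ^ d) (F : ℕ → SimpleGraph (Fin N))
    (t : ℕ) (v : Fin N) {C : ℕ}
    (hC : ∀ β ≤ t, ((F β).chromaticNumber).toNat ≤ C) :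
    fcol d s F t v ≤ 2 * (d + 1) * C := by
  have hval : (v : ℕ) < s ^ d := lt_of_lt_of_le v.isLt hNs
  have hT := Tt_le F t v
  obtain ⟨hl1, hld⟩ := desc_level (val := (v : ℕ)) (T := Tt F t v) hs hd hval hT
  have hp := desc_parity (d := d) (s := s) (t := t) (T := Tt F t v) (val := (v : ℕ))
  have hc : col (F (desc d s t (Tt F t v) (v : ℕ)).2.2) v < C := by
    have h1 := col_lt (F (desc d s t (Tt F t v) (v : ℕ)).2.2) v
    have h2 := hC _ (desc_beta_le (d := d) (s := s) (t := t)
      (T := Tt F t v) (val := (v : ℕ)))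
    omega
  unfold fcol enc
  set ℓ := (desc d s t (Tt F t v) (v : ℕ)).1
  set p := (desc d s t (Tt F t v) (v : ℕ)).2.1
  set c := col (F (desc d s t (Tt F t v) (v : ℕ)).2.2) v
  have h3 : 2 * d * (c + 1) ≤ 2 * d * C := Nat.mul_le_mul_left _ (by omega)
  have h4 : 2 * d * C ≤ 2 * (d + 1) * C := Nat.mul_le_mul_right _ (by omega)
  have h5 : 2 * d * (c + 1) = 2 * d * c + 2 * d := by ring
  omega

/-! ### Congruence: the coloring depends only on the history up to time `t` -/

lemma tch_congr {F F' : ℕ → SimpleGraph (Fin N)} {t τ : ℕ} (h : ∀ i ≤ t, F i = F' i)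
    (hτ : τ ≤ t) (v : Fin N) : tch F τ v ↔ tch F' τ v := by
  unfold tch newAdj
  rw [h τ hτ, h (τ - 1) (by omega)]

lemma Tt_congr {F F' : ℕ → SimpleGraph (Fin N)} {t t' : ℕ} (h : ∀ i ≤ t', F i = F' i)
    (ht : t ≤ t') (v : Fin N) : Tt F t v = Tt F' t v := by
  classical
  induction t with
  | zero => rfl
  | succ t ih =>
    unfold Tt
    rw [Nat.findGreatest_succ, Nat.findGreatest_succ]
    by_cases h1 : tch F (t + 1) v
    · rw [if_pos h1, if_pos ((tch_congr h ht v).1 h1)]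
    · rw [if_neg h1, if_neg (fun h2 => h1 ((tch_congr h ht v).2 h2))]
      exact ih (by omega)

lemma fcol_congr {F F' : ℕ → SimpleGraph (Fin N)} {t : ℕ} (h : ∀ i ≤ t, F i = F' i)
    (d s : ℕ) (v : Fin N) : fcol d s F t v = fcol d s F' t v := by
  unfold fcol
  rw [Tt_congr h (le_refl t) v,
    h _ (desc_beta_le (d := d) (s := s) (t := t) (T := Tt F' t v) (val := (v : ℕ)))]



/-! ### The per-step recount bound -/

lemma card_le_Ico {N : ℕ} {S : Finset (Fin N)} (f : Fin N → ℕ) (lo hi : ℕ)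
    (hmem : ∀ v ∈ S, f v ∈ Finset.Ico lo hi)
    (hinj : ∀ u ∈ S, ∀ v ∈ S, f u = f v → u = v) :
    S.card ≤ hi - lo := by
  classical
  have h := Finset.card_le_card_of_injOn (s := S) (t := Finset.Ico lo hi) f hmem
    (fun u hu v hv he => hinj u (by simpa using hu) v (by simpa using hv) he)
  simpa [Nat.card_Ico] using h

lemma fcol_recount (hs : 1 ≤ s) (hd : 1 ≤ d) (hNs : N ≤ s ^ d)
    (F : ℕ → SimpleGraph (Fin N)) (t : ℕ) :
    recount (fcol d s F t) (fcol d s F (t + 1)) ≤ (d + 1) * s := by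
  classical
  set SL1 := Finset.univ.filter (fun v : Fin N => lvlOf d s (t + 1) (Tt F (t + 1) v) = 1)
    with hSL1
  set SX := fun ℓ : ℕ => Finset.univ.filter (fun v : Fin N => XT s t ℓ (Tt F (t + 1) v))
    with hSX
  set SV := Finset.univ.filter (fun v : Fin N => XV s d t (v : ℕ)) with hSV
  -- inclusion
  have hincl : (Finset.univ.filter fun v : Fin N => fcol d s F t v ≠ fcol d s F (t + 1) v)
      ⊆ (SL1 ∪ (Finset.Icc 2 d).biUnion SX) ∪ SV := by
    intro v hv
    have hne := (Finset.mem_filter.1 hv).2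
    by_cases htch : tch F (t + 1) v
    · have h1 : Tt F (t + 1) v = t + 1 := Tt_succ_of htch
      apply Finset.mem_union_left
      apply Finset.mem_union_left
      rw [hSL1, Finset.mem_filter]
      exact ⟨Finset.mem_univ v, by rw [h1]; exact lvlOf_self hs hd (by omega)⟩
    · have hTeq : Tt F (t + 1) v = Tt F t v := Tt_succ_of_not htch
      have hval : (v : ℕ) < s ^ d := lt_of_lt_of_le v.isLt hNs
      have hT := Tt_le F t v
      by_cases hL1 : lvlOf d s (t + 1) (Tt F t v) = 1
      · apply Finset.mem_union_left
        apply Finset.mem_union_left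
        rw [hSL1, Finset.mem_filter]
        exact ⟨Finset.mem_univ v, by rw [hTeq]; exact hL1⟩
      by_cases hXTv : XT s t (lvlOf d s (t + 1) (Tt F t v)) (Tt F t v)
      · apply Finset.mem_union_left
        apply Finset.mem_union_right
        apply Finset.mem_biUnion.2
        refine ⟨lvlOf d s (t + 1) (Tt F t v), ?_, ?_⟩
        · rw [Finset.mem_Icc]
          have h1 := lvlOf_pos (d := d) (s := s) (T := Tt F t v) hd (show Tt F t v ≤ t + 1 by omega)
          have h2 := lvlOf_le d s (t + 1) (Tt F t v)
          omega
        · rw [hSX, Finset.mem_filter]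
          exact ⟨Finset.mem_univ v, by rw [hTeq]; exact hXTv⟩
      by_cases hXVv : XV s d t (v : ℕ)
      · apply Finset.mem_union_right
        rw [hSV, Finset.mem_filter]
        exact ⟨Finset.mem_univ v, hXVv⟩
      exfalso
      apply hne
      have hstable := desc_stable hs hd hval hT hL1 hXTv hXVv
      unfold fcol
      rw [hTeq, hstable]
  -- cardinalities
  have hSVcard : SV.card ≤ s := by
    have h := card_le_Ico (S := SV) (fun v => (v : ℕ))
      (((t + 1) - bstart s d (t + 1)) * s) (((t + 1) - bstart s d (t + 1)) * s + s)
      (fun v hv => by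
        rw [Finset.mem_Ico]
        obtain ⟨h1, h2⟩ := (Finset.mem_filter.1 (hSV ▸ hv)).2
        rw [show ((t + 1) - bstart s d (t + 1) + 1) * s
          = ((t + 1) - bstart s d (t + 1)) * s + s from by ring] at h2
        exact ⟨h1, h2⟩)
      (fun u _ v _ he => Fin.val_injective he)
    omega
  have hSXcard : ∀ ℓ, (SX ℓ).card ≤ s := by
    intro ℓ
    have h := card_le_Ico (S := SX ℓ) (fun v => Tt F (t + 1) v)
      (bstart s ℓ (t + 1) - (((t + 1) - bstart s ℓ (t + 1)) * s + gsum s (ℓ - 2)) - s)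
      (bstart s ℓ (t + 1) - (((t + 1) - bstart s ℓ (t + 1)) * s + gsum s (ℓ - 2)))
      (fun v hv => by
        rw [Finset.mem_Ico]
        obtain ⟨h0, h1, h2⟩ : XT s t ℓ (Tt F (t + 1) v) := by
          have h5 := hv
          rw [hSX] at h5
          simpa using h5
        rw [show ((t + 1) - bstart s ℓ (t + 1) + 1) * s
          = ((t + 1) - bstart s ℓ (t + 1)) * s + s from by ring] at h2
        omega)
      (fun u hu v hv he => by
        have h0 : 0 < Tt F (t + 1) u := by
          have h5 := hu
          rw [hSX] at h5
          exact ((by simpa using h5 : XT s t ℓ (Tt F (t + 1) u))).1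
        exact Tt_inj (t := t + 1) h0 he)
    omega
  have hSL1card : SL1.card ≤ s := by
    rcases Nat.lt_or_ge d 2 with hd2 | hd2
    · -- d = 1
      have hd1 : d = 1 := by omega
      calc SL1.card ≤ (Finset.univ : Finset (Fin N)).card := Finset.card_le_card
            (by rw [hSL1]; exact Finset.filter_subset _ _)
        _ = N := by simp
        _ ≤ s := by rw [hd1] at hNs; simpa using hNs
    · have h := card_le_Ico (S := SL1) (fun v => Tt F (t + 1) v) ((t + 2) - s) (t + 2)
        (fun v hv => by
          have hv2 := (Finset.mem_filter.1 (hSL1 ▸ hv)).2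
          rw [Finset.mem_Ico]
          have h0 : 0 < Tt F (t + 1) v := by
            rcases Nat.eq_zero_or_pos (Tt F (t + 1) v) with h1 | h1
            · rw [h1, lvlOf_untouched] at hv2; omega
            · exact h1
          have hTle : Tt F (t + 1) v ≤ t + 1 := Tt_le F (t + 1) v
          have h2 : t + 1 < Ech s 2 (Tt F (t + 1) v) :=
            lt_Ech_of_lvlOf_lt (d := d) (s := s) h0 (by omega) hd2
          have h3 : Ech s 2 (Tt F (t + 1) v) ≤ Tt F (t + 1) v + gsum s 1 :=
            Ech_le_gsum (by omega) _
          have h4 : gsum s 1 = s := by simp [gsum]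
          omega)
        (fun u hu v hv he => by
          have hu2 := (Finset.mem_filter.1 (hSL1 ▸ hu)).2
          have h0 : 0 < Tt F (t + 1) u := by
            rcases Nat.eq_zero_or_pos (Tt F (t + 1) u) with h1 | h1
            · rw [h1, lvlOf_untouched] at hu2; omega
            · exact h1
          exact Tt_inj h0 he)
      omega
  -- put it together
  unfold recount
  have hbi : ((Finset.Icc 2 d).biUnion SX).card ≤ (d - 1) * s := by
    calc ((Finset.Icc 2 d).biUnion SX).card ≤ ∑ ℓ ∈ Finset.Icc 2 d, (SX ℓ).card :=
          Finset.card_biUnion_le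
      _ ≤ ∑ _ℓ ∈ Finset.Icc 2 d, s := Finset.sum_le_sum (fun ℓ _ => hSXcard ℓ)
      _ = (d - 1) * s := by
          rw [Finset.sum_const, Nat.card_Icc, smul_eq_mul,
            show d + 1 - 2 = d - 1 from by omega]
  have h1 := Finset.card_le_card hincl
  have h2 := Finset.card_union_le (SL1 ∪ (Finset.Icc 2 d).biUnion SX) SV
  have h3 := Finset.card_union_le SL1 ((Finset.Icc 2 d).biUnion SX)
  have hds : (d - 1) * s + 1 * s = d * s := by
    rw [← Nat.add_mul, show d - 1 + 1 = d from by omega]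
  have hdp : (d + 1) * s = d * s + 1 * s := by ring
  have h1s : 1 * s = s := Nat.one_mul s
  omega

end Main
end BigBuckets

theorem bigBuckets_deamortized (d N : ℕ) (hd : 1 ≤ d) (hN : 1 ≤ N) :
    ∃ A : List (SimpleGraph (Fin N)) → (Fin N → ℕ),
      ∀ (m : ℕ) (G : ℕ → SimpleGraph (Fin N)),
        G 0 = ⊥ → (∀ t < m, isStep (G t) (G (t + 1))) →
        (∀ t ≤ m, IsProperNat (G t) (A ((List.range (t + 1)).map G))) ∧
        (∀ t ≤ m, ∀ v : Fin N,
          1 ≤ A ((List.range (t + 1)).map G) v ∧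
          A ((List.range (t + 1)).map G) v ≤
            2 * (d + 1) *
              ((Finset.range (m + 1)).sup fun t => ((G t).chromaticNumber).toNat)) ∧
        (∀ t < m,
          recount (A ((List.range (t + 1)).map G)) (A ((List.range (t + 2)).map G))
            ≤ (d + 1) * ⌈(N : ℝ) ^ ((1 : ℝ) / d)⌉₊) := by
  classical
  set s : ℕ := ⌈(N : ℝ) ^ ((1 : ℝ) / d)⌉₊ with hsdef
  have hrpos : (0 : ℝ) < (N : ℝ) ^ ((1 : ℝ) / d) :=
    Real.rpow_pos_of_pos (by exact_mod_cast hN) _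
  have hs : 1 ≤ s := by
    rw [hsdef]
    exact Nat.one_le_ceil_iff.2 hrpos
  have hNs : N ≤ s ^ d := by
    have h1 : ((N : ℝ) ^ ((1 : ℝ) / d)) ≤ (s : ℝ) := Nat.le_ceil _
    have h2 : (N : ℝ) ≤ (s : ℝ) ^ d := by
      have h3 : ((N : ℝ) ^ ((1 : ℝ) / d)) ^ (d : ℕ) ≤ (s : ℝ) ^ (d : ℕ) :=
        pow_le_pow_left₀ (le_of_lt hrpos) h1 d
      calc (N : ℝ) = ((N : ℝ) ^ ((1 : ℝ) / d)) ^ (d : ℕ) := by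
            rw [← Real.rpow_natCast ((N : ℝ) ^ ((1 : ℝ) / d)) d, ← Real.rpow_mul (by positivity)]
            rw [one_div, inv_mul_cancel₀ (by exact_mod_cast (by omega : d ≠ 0))]
            simp
        _ ≤ (s : ℝ) ^ (d : ℕ) := h3
    exact_mod_cast h2
  refine ⟨fun L => BigBuckets.fcol d s (fun i => L.getD i ⊥) (L.length - 1), ?_⟩
  intro m G hG0 hsteps
  have hA : ∀ t : ℕ, (fun L => BigBuckets.fcol d s (fun i => L.getD i ⊥) (L.length - 1))
      ((List.range (t + 1)).map G) = BigBuckets.fcol d s G t := by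
    intro t
    have hlen : ((List.range (t + 1)).map G).length = t + 1 := by simp
    simp only [hlen, Nat.add_sub_cancel]
    funext v
    apply BigBuckets.fcol_congr
    intro i hi
    have hilt : i < ((List.range (t + 1)).map G).length := by omega
    rw [List.getD_eq_getElem _ _ hilt]
    simp
  refine ⟨?_, ?_, ?_⟩
  · intro t ht
    rw [hA t]
    exact BigBuckets.fcol_proper hs hd hNs G t (fun τ hτ => hsteps τ (by omega))
  · intro t ht v
    rw [hA t]
    refine ⟨BigBuckets.fcol_pos d s G t v, ?_⟩
    apply BigBuckets.fcol_le hs hd hNs G t v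
    intro β hβ
    exact Finset.le_sup (f := fun t => ((G t).chromaticNumber).toNat)
      (Finset.mem_range.2 (by omega))
  · intro t ht
    rw [show t + 2 = (t + 1) + 1 from rfl, hA t, hA (t + 1)]
    exact BigBuckets.fcol_recount hs hd hNs G t
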